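/- Every s-t path of G enters the bridge component C_i at the unique vertex head(b_{i-1}) (or s for i=1): i.e., the first vertex of C_i visited by any s-t path is head(b_{i-1}). -/

import Mathlib

variable {V : Type*}

/-- Reachability via directed edges of relation `E`. -/
def reaches (E : V → V → Prop) : V → V → Prop := Relation.ReflTransGen E

/-- The graph with the single edge `e` deleted. -/
def eraseEdge (E : V → V → Prop) (e : V × V) : V → V → Prop :=
  fun a b => E a b ∧ (a, b) ≠ e

/-- `e` is an `s`-`t` bridge: it is an edge and its removal destroys all `s`-`t` paths. -/
def IsBridge (E : V → V → Prop) (s t : V) (e : V × V) : Prop :=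
  E e.1 e.2 ∧ ¬ reaches (eraseEdge E e) s t

/-- A directed walk from `s` to `t` whose successive vertices after `s` are `p`. -/
def IsWalk (E : V → V → Prop) (s t : V) (p : List V) : Prop :=
  List.Chain E s p ∧ (s :: p).getLast (List.cons_ne_nil s p) = t

/-- The list of edges of the walk `s :: p`. -/
def edgesOf (s : V) (p : List V) : List (V × V) := (s :: p).zip p

/-- R_i: vertices reachable from s in G \ b_i (for i < k), and all vertices
reachable from s in G for i = k. -/
def Rset (E : V → V → Prop) (s : V) (B : List (V × V)) (i : ℕ) (v : V) : Prop :=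
  if h : i < B.length then reaches (eraseEdge E (B.get ⟨i, h⟩)) s v else reaches E s v

/-- The bridge components: C_0 = R_0 and C_i = R_i \ R_{i-1} for i ≥ 1. -/
def Comp (E : V → V → Prop) (s : V) (B : List (V × V)) (i : ℕ) (v : V) : Prop :=
  Rset E s B i v ∧ (i = 0 ∨ ¬ Rset E s B (i - 1) v)

namespace Stmt16Aux

def edgeList (w : List V) : List (V × V) := w.zip w.tail

lemma edgesOf_eq (s : V) (p : List V) : edgesOf s p = edgeList (s :: p) := rfl

lemma edgeList_nil : edgeList ([] : List V) = [] := rfl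
lemma edgeList_single (a : V) : edgeList [a] = [] := rfl
lemma edgeList_cons_cons (x y : V) (l : List V) :
    edgeList (x :: y :: l) = (x, y) :: edgeList (y :: l) := rfl

lemma edgeList_append (u : List V) (a : V) (v : List V) :
    edgeList (u ++ a :: v) = edgeList (u ++ [a]) ++ edgeList (a :: v) := by
  induction u with
  | nil => simp [edgeList]
  | cons x u ih =>
    cases u with
    | nil => simp [edgeList_cons_cons, edgeList_single]
    | cons y u' =>
      simp only [List.cons_append] at ih ⊢
      rw [edgeList_cons_cons, edgeList_cons_cons, ih, List.cons_append]

lemma mem_edgeList_first {e : V × V} : ∀ {w : List V}, e ∈ edgeList w →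
    ∃ u v, w = u ++ e.1 :: e.2 :: v ∧ e ∉ edgeList (u ++ [e.1]) := by
  intro w
  induction w with
  | nil => simp [edgeList]
  | cons x l ih =>
    cases l with
    | nil => simp [edgeList]
    | cons y l' =>
      intro h
      by_cases hxy : e = (x, y)
      · refine ⟨[], l', by simp [hxy], by simp [edgeList, hxy]⟩
      · have h2 : e ∈ edgeList (y :: l') := by
          rw [edgeList_cons_cons] at h
          rcases List.mem_cons.1 h with h1 | h1
          · exact absurd h1 hxy
          · exact h1
        obtain ⟨u, v, hw, hne⟩ := ih h2
        refine ⟨x :: u, v, by rw [List.cons_append, ← hw], ?_⟩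
        cases u with
        | nil =>
          simp only [List.nil_append] at hw
          have : y = e.1 := (List.cons.inj hw).1
          simp only [List.cons_append, List.nil_append, edgeList_cons_cons, edgeList_single]
          intro hmem
          rcases List.mem_cons.1 hmem with h1 | h1
          · exact hxy (by rw [h1, this])
          · simp at h1
        | cons z u' =>
          have : y = z := (List.cons.inj hw).1
          subst this
          simp only [List.cons_append, edgeList_cons_cons]
          intro hmem
          rcases List.mem_cons.1 hmem with h1 | h1
          · exact hxy h1
          · exact hne h1

lemma mem_edgeList_last {e : V × V} : ∀ {w : List V}, e ∈ edgeList w →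
    ∃ u v, w = u ++ e.1 :: e.2 :: v ∧ e ∉ edgeList (e.2 :: v) := by
  intro w
  induction w with
  | nil => simp [edgeList]
  | cons x l ih =>
    cases l with
    | nil => simp [edgeList]
    | cons y l' =>
      intro h
      by_cases h2 : e ∈ edgeList (y :: l')
      · obtain ⟨u, v, hw, hne⟩ := ih h2
        exact ⟨x :: u, v, by rw [List.cons_append, ← hw], hne⟩
      · have hxy : e = (x, y) := by
          rw [edgeList_cons_cons] at h
          rcases List.mem_cons.1 h with h1 | h1
          · exact h1
          · exact absurd h1 h2
        refine ⟨[], l', by simp [hxy], ?_⟩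
        simpa [hxy] using h2

lemma chain_reach {R : V → V → Prop} : ∀ (l : List V) (a : V), List.Chain R a l →
    ∀ j (hj : j < (a :: l).length), Relation.ReflTransGen R a ((a :: l).get ⟨j, hj⟩) := by
  intro l
  induction l with
  | nil =>
    intro a _ j hj
    simp at hj
    subst hj
    exact Relation.ReflTransGen.refl
  | cons x l ih =>
    intro a h j hj
    cases j with
    | zero => exact Relation.ReflTransGen.refl
    | succ j =>
      have h' := List.chain_cons.1 h
      have := ih x h'.2 j (by simpa using hj)
      exact Relation.ReflTransGen.head h'.1 this

lemma chain_reach_last {R : V → V → Prop} : ∀ (l : List V) (a : V), List.Chain R a l →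
    Relation.ReflTransGen R a ((a :: l).getLast (List.cons_ne_nil a l)) := by
  intro l
  induction l with
  | nil => intro a _; exact Relation.ReflTransGen.refl
  | cons x l ih =>
    intro a h
    have h' := List.chain_cons.1 h
    have := ih x h'.2
    rw [List.getLast_cons (List.cons_ne_nil x l)]
    exact Relation.ReflTransGen.head h'.1 this

lemma chain'_erase {E : V → V → Prop} {e : V × V} : ∀ {l : List V},
    List.Chain' E l → e ∉ edgeList l → List.Chain' (eraseEdge E e) l := by
  intro l
  induction l with
  | nil => intros; exact List.isChain_nil
  | cons x l ih =>
    cases l with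
    | nil => intros; exact List.isChain_singleton _
    | cons y l' =>
      intro h hne
      rw [edgeList_cons_cons] at hne
      have h' := List.chain_cons.1 h
      refine List.chain_cons.2 ⟨⟨h'.1, fun he => hne (by simp [he])⟩, ?_⟩
      exact ih h'.2 (fun hm => hne (List.mem_cons_of_mem _ hm))

lemma cons_head_helper {u : List V} {s a : V} {p X : List V} (Y : List V)
    (h : s :: p = u ++ a :: X) : ∃ q, u ++ a :: Y = s :: q := by
  cases u with
  | nil =>
    have : s = a := ((List.cons.inj h)).1
    exact ⟨Y, by rw [List.nil_append, this]⟩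
  | cons x u' =>
    have : s = x := ((List.cons.inj h)).1
    exact ⟨u' ++ a :: Y, by rw [List.cons_append, this]⟩

lemma reach_prefix {R : V → V → Prop} {s : V} {u : List V} {a : V} {rest p : List V}
    (hw : s :: p = u ++ a :: rest) (hch : List.Chain' R (u ++ [a])) :
    Relation.ReflTransGen R s a := by
  obtain ⟨q, hq⟩ := cons_head_helper (X := rest) [] hw
  rw [hq] at hch
  have h := chain_reach_last q s hch
  have hl : (s :: q).getLast (List.cons_ne_nil s q) = a := by
    have h1 : (s :: q).getLast? = some a := by
      rw [← hq]; exact List.getLast?_concat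
    rw [List.getLast?_eq_getLast (List.cons_ne_nil s q)] at h1
    exact Option.some.inj h1
  rwa [hl] at h

lemma reach_get_prefix {R : V → V → Prop} {s : V} {u : List V} {a : V} {rest p : List V}
    (hw : s :: p = u ++ a :: rest) (hch : List.Chain' R (u ++ [a]))
    {j : ℕ} (hj : j < (s :: p).length) (hju : j < (u ++ [a]).length) :
    Relation.ReflTransGen R s ((s :: p).get ⟨j, hj⟩) := by
  obtain ⟨q, hq⟩ := cons_head_helper (X := rest) [] hw
  have hpre : s :: p = (u ++ [a]) ++ rest := by rw [hw]; simp
  have hg : (s :: p).get ⟨j, hj⟩ = (u ++ [a]).get ⟨j, hju⟩ := by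
    rw [List.get_of_eq hpre ⟨j, hj⟩]
    simp only [List.get_eq_getElem, Fin.cast]
    exact List.getElem_append_left hju
  have hq' : j < (s :: q).length := by rw [← hq]; exact hju
  have hg2 : (u ++ [a]).get ⟨j, hju⟩ = (s :: q).get ⟨j, hq'⟩ := List.get_of_eq hq ⟨j, hju⟩
  have hch' : List.Chain R s q := by rw [hq] at hch; exact hch
  rw [hg, hg2]
  exact chain_reach q s hch' j hq'

lemma pos_lemma {α : Type*} : ∀ (P1 P2 : List α) {c b : α} {S1 S2 : List α},
    P1 ++ c :: S1 = P2 ++ b :: S2 → b ≠ c → b ∉ P1 → c ∉ P2 → False := by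
  intro P1
  induction P1 with
  | nil =>
    intro P2 c b S1 S2 h hne hb hc
    cases P2 with
    | nil =>
      simp only [List.nil_append, List.cons.injEq] at h
      exact hne h.1.symm
    | cons x P2' =>
      simp only [List.nil_append, List.cons_append, List.cons.injEq] at h
      exact hc (h.1 ▸ List.mem_cons_self (a := x) (l := P2'))
  | cons y P1' ih =>
    intro P2 c b S1 S2 h hne hb hc
    cases P2 with
    | nil =>
      simp only [List.cons_append, List.nil_append, List.cons.injEq] at h
      exact hb (h.1.symm ▸ List.mem_cons_self (a := y) (l := P1'))
    | cons x P2' =>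
      simp only [List.cons_append, List.cons.injEq] at h
      exact ih P2' h.2 hne (fun hm => hb (List.mem_cons_of_mem _ hm))
        (fun hm => hc (List.mem_cons_of_mem _ hm))

lemma sublist_right_of_not_mem {α : Type*} {a : α} {l : List α} : ∀ {l1 l2 : List α},
    (a :: l).Sublist (l1 ++ l2) → a ∉ l1 → (a :: l).Sublist l2 := by
  intro l1
  induction l1 with
  | nil => intro l2 h _; exact h
  | cons x l1 ih =>
    intro l2 h ha
    rw [List.cons_append] at h
    cases h with
    | cons _ h' => exact ih h' (fun hm => ha (List.mem_cons_of_mem _ hm))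
    | cons_cons _ h' => exact absurd List.mem_cons_self ha

lemma mem_of_pair_sublist_cons {α : Type*} {b c : α} {S : List α}
    (h : [b, c].Sublist (b :: S)) : c ∈ S := by
  cases h with
  | cons _ h' => exact h'.subset (List.mem_cons_of_mem _ (List.mem_cons_self (a := c) (l := [])))
  | cons_cons _ h' => exact h'.subset (List.mem_cons_self (a := c) (l := []))

lemma pair_get_sublist {α : Type*} (B : List α) {i j : ℕ} (hij : i < j) (hj : j < B.length) :
    [B.get ⟨i, hij.trans hj⟩, B.get ⟨j, hj⟩].Sublist B := by
  have h1 : [B.get ⟨i, hij.trans hj⟩].Sublist (B.take j) := by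
    rw [List.singleton_sublist]
    have hi' : i < (B.take j).length := by simp [hj.le]; omega
    have : (B.take j)[i]'hi' = B[i]'(hij.trans hj) := List.getElem_take
    rw [List.get_eq_getElem, ← this]
    exact List.getElem_mem hi'
  have h2 : [B.get ⟨j, hj⟩].Sublist (B.drop j) := by
    rw [List.drop_eq_getElem_cons hj, List.singleton_sublist]
    exact List.mem_cons_self
  have := h1.append h2
  rwa [List.take_append_drop] at this

lemma some_or {α : Type*} (a : α) (o : Option α) : (some a).or o = some a := rfl

lemma lemL (E : V → V → Prop) (s t : V) (b c : V × V) (hbc : b ≠ c)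
    (hEc : E c.1 c.2)
    (hH : ∀ p : List V, IsWalk E s t p → [b, c].Sublist (edgesOf s p)) :
    ∀ n (p : List V), p.length ≤ n → IsWalk E s t p →
      ∃ u v, s :: p = u ++ b.1 :: b.2 :: v ∧ b ∉ edgeList (u ++ [b.1]) ∧
        c ∉ edgeList (u ++ [b.1]) := by
  intro n
  induction n with
  | zero =>
    intro p hlen hwp
    have hp : p = [] := List.length_eq_zero_iff.1 (Nat.le_zero.1 hlen)
    subst hp
    have := hH [] hwp
    simp [edgesOf] at this
  | succ n ih =>
    intro p hlen hwp
    have hsub : [b, c].Sublist (edgeList (s :: p)) := hH p hwp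
    have hbE : b ∈ edgeList (s :: p) := hsub.subset List.mem_cons_self
    obtain ⟨u, v, hwk, hbu⟩ := mem_edgeList_first hbE
    by_cases hcu : c ∈ edgeList (u ++ [b.1])
    · -- c occurs before first b : derive contradiction by splicing
      exfalso
      obtain ⟨u1, v1, h1, _⟩ := mem_edgeList_first hcu
      -- c also occurs after b.2
      have hEw : edgeList (s :: p)
          = edgeList (u ++ [b.1]) ++ b :: edgeList (b.2 :: v) := by
        rw [hwk, edgeList_append, edgeList_cons_cons]
      have hcS : c ∈ edgeList (b.2 :: v) := by
        rw [hEw] at hsub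
        exact mem_of_pair_sublist_cons (sublist_right_of_not_mem hsub hbu)
      obtain ⟨u2, v2, h2, _⟩ := mem_edgeList_first hcS
      -- the spliced walk
      have hwfull : s :: p = u1 ++ c.1 :: (c.2 :: (v1 ++ b.2 :: v)) := by
        rw [hwk]
        have : u ++ b.1 :: b.2 :: v = (u ++ [b.1]) ++ b.2 :: v := by simp
        rw [this, h1]; simp
      obtain ⟨q, hq⟩ := cons_head_helper (X := c.2 :: (v1 ++ b.2 :: v)) (c.2 :: v2) hwfull
      -- hq : u1 ++ c.1 :: c.2 :: v2 = s :: q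
      -- Chain' of the spliced walk
      have hwE : List.Chain' E (s :: p) := hwp.1
      have hch1 : List.Chain' E (u1 ++ [c.1]) := by
        have : s :: p = (u1 ++ [c.1]) ++ (c.2 :: (v1 ++ b.2 :: v)) := by
          rw [hwfull]; simp
        exact (this ▸ hwE).left_of_append
      have hch2 : List.Chain' E (c.2 :: v2) := by
        have : s :: p = ((u ++ [b.1]) ++ u2 ++ [c.1]) ++ (c.2 :: v2) := by
          rw [hwk]
          have h3 : u ++ b.1 :: b.2 :: v = (u ++ [b.1]) ++ b.2 :: v := by simp
          rw [h3, h2]; simp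
        exact (this ▸ hwE).right_of_append
      have hchw' : List.Chain' E (u1 ++ c.1 :: c.2 :: v2) := by
        have : u1 ++ c.1 :: c.2 :: v2 = (u1 ++ [c.1]) ++ (c.2 :: v2) := by simp
        rw [this]; show List.IsChain E _; rw [List.isChain_append]
        refine ⟨hch1, hch2, ?_⟩
        intro x hx y hy
        rw [List.getLast?_concat] at hx
        simp at hx hy
        rw [← hx, ← hy]
        exact hEc
      -- last of spliced walk is t
      have hlastp : (s :: p).getLast? = some t := by
        rw [List.getLast?_eq_getLast (List.cons_ne_nil s p), hwp.2]
      have hlast2 : (c.2 :: v2).getLast? = some t := by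
        have hx : s :: p = ((u ++ [b.1]) ++ u2 ++ [c.1]) ++ (c.2 :: v2) := by
          rw [hwk]
          have h3 : u ++ b.1 :: b.2 :: v = (u ++ [b.1]) ++ b.2 :: v := by simp
          rw [h3, h2]; simp
        rw [hx, List.getLast?_append,
          List.getLast?_eq_getLast (l := c.2 :: v2) (List.cons_ne_nil _ _), some_or] at hlastp
        rw [List.getLast?_eq_getLast (l := c.2 :: v2) (List.cons_ne_nil _ _)]
        exact hlastp
      have hlastq : (s :: q).getLast? = some t := by
        rw [← hq]
        have hx : u1 ++ c.1 :: c.2 :: v2 = (u1 ++ [c.1]) ++ (c.2 :: v2) := by simp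
        rw [hx, List.getLast?_append, hlast2, some_or]
      have hwq : IsWalk E s t q := by
        constructor
        · have : List.Chain' E (s :: q) := by rw [← hq]; exact hchw'
          exact this
        · rw [List.getLast?_eq_getLast (List.cons_ne_nil s q)] at hlastq
          exact Option.some.inj hlastq
      -- length decreases
      have hlq : q.length ≤ n := by
        have e1 := congrArg List.length hwfull
        have e2 := congrArg List.length h2
        have e3 := congrArg List.length hq
        simp at e1 e2 e3
        omega
      obtain ⟨u', v', hw', hbu', hcu'⟩ := ih q hlq hwq
      -- contradiction via positions
      have heq1 : edgeList (s :: q)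
          = edgeList (u1 ++ [c.1]) ++ c :: edgeList (c.2 :: v2) := by
        rw [← hq, edgeList_append, edgeList_cons_cons]
      have heq2 : edgeList (s :: q)
          = edgeList (u' ++ [b.1]) ++ b :: edgeList (b.2 :: v') := by
        rw [hw', edgeList_append, edgeList_cons_cons]
      have hbP1 : b ∉ edgeList (u1 ++ [c.1]) := by
        intro hmem
        apply hbu
        rw [h1, edgeList_append]
        exact List.mem_append_left _ hmem
      exact pos_lemma _ _ (heq1.symm.trans heq2) hbc hbP1 hcu'
    · exact ⟨u, v, hwk, hbu, hcu⟩

end Stmt16Aux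

open Stmt16Aux in
/-- every s-t path enters bridge component C_i at head(b_{i-1})
(or at s for the first component). -/
theorem stmt16 (E : V → V → Prop) (s t : V) (hst : reaches E s t)
    (B : List (V × V)) (hnd : B.Nodup)
    (hB : ∀ e : V × V, IsBridge E s t e ↔ e ∈ B)
    (horder : ∀ p : List V, IsWalk E s t p → B.Sublist (edgesOf s p)) :
    ∀ p : List V, IsWalk E s t p → ∀ i ≤ B.length,
      ∀ j : ℕ, (hj : j < (s :: p).length) →
        Comp E s B i ((s :: p).get ⟨j, hj⟩) →
        (∀ j' : ℕ, (hj' : j' < j) → ¬ Comp E s B i ((s :: p).get ⟨j', lt_trans hj' hj⟩)) →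
        (s :: p).get ⟨j, hj⟩ = (if i = 0 then s else (B.getD (i - 1) (s, s)).2) := by
  intro p hwp i hi j hj hcomp hmin
  by_cases hi0 : i = 0
  · subst hi0
    have hs0 : Comp E s B 0 s := by
      refine ⟨?_, Or.inl rfl⟩
      unfold Rset
      split <;> exact Relation.ReflTransGen.refl
    cases j with
    | zero => simp
    | succ j' => exact absurd hs0 (hmin 0 (Nat.succ_pos j'))
  · have hi1 : i - 1 < B.length := by omega
    set b := B.get ⟨i - 1, hi1⟩ with hbdef
    have hbB : b ∈ B := List.get_mem B _
    have hbr : IsBridge E s t b := (hB b).2 hbB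
    have hwE : List.Chain' E (s :: p) := hwp.1
    -- decomposition at the first occurrence of b, with Rset i b.2
    obtain ⟨u, v, hwk, hbu, hRi⟩ :
        ∃ u v, s :: p = u ++ b.1 :: b.2 :: v ∧ b ∉ edgeList (u ++ [b.1]) ∧
          Rset E s B i b.2 := by
      by_cases hilen : i < B.length
      · set c := B.get ⟨i, hilen⟩ with hcdef
        have hbc : b ≠ c := by
          intro h
          have : (⟨i - 1, hi1⟩ : Fin B.length) = ⟨i, hilen⟩ :=
            (List.Nodup.get_inj_iff hnd).1 h
          have := Fin.mk.injEq (i-1) hi1 i hilen ▸ this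
          omega
        have hEc : E c.1 c.2 := ((hB c).2 (List.get_mem B _)).1
        have hH : ∀ p' : List V, IsWalk E s t p' → [b, c].Sublist (edgesOf s p') := by
          intro p' hwp'
          exact (pair_get_sublist B (show i - 1 < i by omega) hilen).trans (horder p' hwp')
        obtain ⟨u, v, hwk, hbu, hcu⟩ := lemL E s t b c hbc hEc hH p.length p le_rfl hwp
        refine ⟨u, v, hwk, hbu, ?_⟩
        unfold Rset
        rw [dif_pos hilen]
        -- reaches (eraseEdge E c) s b.2
        have hw2 : s :: p = (u ++ [b.1]) ++ b.2 :: v := by rw [hwk]; simp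
        have hch : List.Chain' E ((u ++ [b.1]) ++ [b.2]) := by
          have hx : s :: p = ((u ++ [b.1]) ++ [b.2]) ++ v := by rw [hwk]; simp
          exact (hx ▸ hwE).left_of_append
        have hcfree : c ∉ edgeList ((u ++ [b.1]) ++ [b.2]) := by
          have hx : (u ++ [b.1]) ++ [b.2] = u ++ b.1 :: [b.2] := by simp
          rw [hx, edgeList_append u b.1 [b.2]]
          intro hmem
          rcases List.mem_append.1 hmem with h1 | h1
          · exact hcu h1
          · rw [edgeList_cons_cons, edgeList_single] at h1
            rcases List.mem_cons.1 h1 with h2 | h2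
            · exact hbc ((Prod.mk.eta (p := b)).symm.trans h2.symm)
            · simp at h2
        exact reach_prefix hw2 (chain'_erase hch hcfree)
      · have hbE : b ∈ edgeList (s :: p) := (horder p hwp).subset hbB
        obtain ⟨u, v, hwk, hbu⟩ := mem_edgeList_first hbE
        refine ⟨u, v, hwk, hbu, ?_⟩
        unfold Rset
        rw [dif_neg hilen]
        have hw2 : s :: p = (u ++ [b.1]) ++ b.2 :: v := by rw [hwk]; simp
        have hch : List.Chain' E ((u ++ [b.1]) ++ [b.2]) := by
          have hx : s :: p = ((u ++ [b.1]) ++ [b.2]) ++ v := by rw [hwk]; simp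
          exact (hx ▸ hwE).left_of_append
        exact reach_prefix hw2 hch
    -- b.2 → t avoiding b
    have hsuf : Relation.ReflTransGen (eraseEdge E b) b.2 t := by
      have hbE : b ∈ edgeList (s :: p) := (horder p hwp).subset hbB
      obtain ⟨u0, v0, hwk0, hbv0⟩ := mem_edgeList_last hbE
      have hx : s :: p = (u0 ++ [b.1]) ++ (b.2 :: v0) := by rw [hwk0]; simp
      have hch : List.Chain' E (b.2 :: v0) := (hx ▸ hwE).right_of_append
      have hch' : List.Chain (eraseEdge E b) b.2 v0 := chain'_erase hch hbv0
      have hl : (b.2 :: v0).getLast (List.cons_ne_nil _ _) = t := by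
        have hlastp : (s :: p).getLast? = some t := by
          rw [List.getLast?_eq_getLast (List.cons_ne_nil s p), hwp.2]
        rw [hx, List.getLast?_append,
          List.getLast?_eq_getLast (l := b.2 :: v0) (List.cons_ne_nil _ _), some_or] at hlastp
        exact Option.some.inj hlastp
      have := chain_reach_last v0 b.2 hch'
      rwa [hl] at this
    have hnR : ¬ Rset E s B (i - 1) b.2 := by
      unfold Rset
      rw [dif_pos hi1]
      intro h
      exact hbr.2 (h.trans hsuf)
    have hCm : Comp E s B i b.2 := ⟨hRi, Or.inr hnR⟩
    have hlen : (s :: p).length = u.length + 2 + v.length := by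
      rw [hwk]; simp; omega
    have hm : u.length + 1 < (s :: p).length := by omega
    have hgm : (s :: p).get ⟨u.length + 1, hm⟩ = b.2 := by
      have hw2 : s :: p = (u ++ [b.1]) ++ b.2 :: v := by rw [hwk]; simp
      rw [List.get_of_eq hw2 ⟨u.length + 1, hm⟩]
      simp only [List.get_eq_getElem, Fin.cast]
      rw [List.getElem_append_right (by simp)]
      simp
    rcases lt_trichotomy j (u.length + 1) with hlt | heq | hgt
    · exfalso
      have hju : j < (u ++ [b.1]).length := by simpa using hlt
      have hchp : List.Chain' (eraseEdge E b) (u ++ [b.1]) := by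
        have hx : s :: p = (u ++ [b.1]) ++ (b.2 :: v) := by rw [hwk]; simp
        exact chain'_erase (hx ▸ hwE).left_of_append hbu
      have hjr : Relation.ReflTransGen (eraseEdge E b) s ((s :: p).get ⟨j, hj⟩) :=
        reach_get_prefix hwk hchp hj hju
      have hRj : Rset E s B (i - 1) ((s :: p).get ⟨j, hj⟩) := by
        unfold Rset
        rw [dif_pos hi1]
        exact hjr
      rcases hcomp.2 with h0 | hnot
      · exact hi0 h0
      · exact hnot hRj
    · subst heq
      rw [if_neg hi0]
      have : B.getD (i - 1) (s, s) = b := by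
        rw [List.getD_eq_getElem B _ hi1]
        rfl
      rw [this]
      exact hgm
    · exact absurd (hgm ▸ hCm) (hmin (u.length + 1) hgt)
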